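/- (van der Corput inequality in Hilbert space) Let (uₙ) be a bounded sequence in a Hilbert space H. Then limsup_{N→∞} ‖(1/N)∑_{n=1}^N uₙ‖² ≤ 4·limsup_{H→∞} (1/H)∑_{h=1}^H limsup_{N→∞} |(1/N)∑_{n=1}^N ⟨uₙ, u_{n+h}⟩|. -/

import Mathlib

open Filter Finset


lemma vdc_bddU {f : ℕ → ℝ} {C : ℝ} (h : ∀ n, f n ≤ C) :
    IsBoundedUnder (· ≤ ·) (atTop : Filter ℕ) f :=
  ⟨C, Filter.eventually_map.2 (Eventually.of_forall h)⟩

lemma vdc_bddL {f : ℕ → ℝ} {C : ℝ} (h : ∀ n, C ≤ f n) :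
    IsBoundedUnder (· ≥ ·) (atTop : Filter ℕ) f :=
  ⟨C, Filter.eventually_map.2 (Eventually.of_forall h)⟩

lemma vdc_cobddU {f : ℕ → ℝ} {C : ℝ} (h : ∀ n, C ≤ f n) :
    IsCoboundedUnder (· ≤ ·) (atTop : Filter ℕ) f :=
  (vdc_bddL h).isCoboundedUnder_le

lemma vdc_limsup_cmul {c : ℝ} (hc : 0 ≤ c) {f : ℕ → ℝ} {C C' : ℝ} (h0 : ∀ n, C' ≤ f n)
    (hC : ∀ n, f n ≤ C) :
    limsup (fun n => c * f n) atTop = c * limsup f atTop := by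
  have := (monotone_id.const_mul hc).map_limsup_of_continuousAt (F := (atTop : Filter ℕ)) f
    ((continuous_const.mul continuous_id).continuousAt) (vdc_bddU hC) (vdc_cobddU h0)
  simpa [Function.comp_def] using this.symm

lemma vdc_limsup_sum_le {ι : Type*} (s : Finset ι) (f : ι → ℕ → ℝ) (C : ι → ℝ)
    (h0 : ∀ i ∈ s, ∀ n, 0 ≤ f i n) (hC : ∀ i ∈ s, ∀ n, f i n ≤ C i) :
    limsup (fun n => ∑ i ∈ s, f i n) atTop ≤ ∑ i ∈ s, limsup (fun n => f i n) atTop := by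
  induction s using Finset.cons_induction with
  | empty => simp
  | cons a s ha ih =>
    simp only [Finset.sum_cons]
    have hs0 : ∀ n, (0:ℝ) ≤ ∑ i ∈ s, f i n := fun n =>
      Finset.sum_nonneg fun i hi => h0 i (Finset.mem_cons_of_mem hi) n
    have hsC : ∀ n, ∑ i ∈ s, f i n ≤ ∑ i ∈ s, C i := fun n =>
      Finset.sum_le_sum fun i hi => hC i (Finset.mem_cons_of_mem hi) n
    have h1 : limsup (fun n => f a n + ∑ i ∈ s, f i n) atTop ≤
        limsup (f a) atTop + limsup (fun n => ∑ i ∈ s, f i n) atTop := by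
      have := limsup_add_le (f := (atTop : Filter ℕ)) (u := f a) (v := fun n => ∑ i ∈ s, f i n)
        (vdc_bddL (h0 a (Finset.mem_cons_self a s))) (vdc_bddU (hC a (Finset.mem_cons_self a s)))
        (vdc_cobddU hs0) (vdc_bddU hsC)
      simpa [Pi.add_def] using this
    exact h1.trans (by
      gcongr
      exact ih (fun i hi => h0 i (Finset.mem_cons_of_mem hi))
        (fun i hi => hC i (Finset.mem_cons_of_mem hi)))


lemma vdc_shift_sum {V : Type*} [AddCommGroup V] (f : ℕ → V) (k N : ℕ) (hk : 1 ≤ k) :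
    ∑ n ∈ range N, f (n + k) =
      (∑ m ∈ Icc 1 (N + k - 1), f m) - ∑ m ∈ Icc 1 (k - 1), f m := by
  induction N with
  | zero => simp [show 0 + k - 1 = k - 1 by omega]
  | succ N ih =>
    rw [Finset.sum_range_succ, ih, show N + 1 + k - 1 = (N + k - 1) + 1 by omega,
      Finset.sum_Icc_succ_top (by omega : 1 ≤ (N + k - 1) + 1), show N + k - 1 + 1 = N + k by omega]
    abel

lemma vdc_filter_sum_le (γ : ℕ → ℝ) (hγ : ∀ h, 0 ≤ γ h) (K : ℕ) (t : Finset ℕ) (g : ℕ → ℕ)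
    (hinj : ∀ a ∈ t, ∀ b ∈ t, g a = g b → a = b) (hmem : ∀ l ∈ t, g l ∈ Icc 1 K) :
    ∑ l ∈ t, γ (g l) ≤ ∑ h ∈ Icc 1 K, γ h := by
  rw [← Finset.sum_image hinj]
  refine Finset.sum_le_sum_of_subset_of_nonneg ?_ fun i _ _ => hγ i
  intro h hh
  obtain ⟨l, hl, rfl⟩ := Finset.mem_image.1 hh
  exact hmem l hl

lemma vdc_counting (γ : ℕ → ℝ) (hγ : ∀ h, 0 ≤ γ h) (K : ℕ) (hK : 1 ≤ K) :
    ∑ p ∈ Icc 1 K ×ˢ Icc 1 K,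
        (if p.1 = p.2 then (0:ℝ)
          else ((K:ℝ)⁻¹) ^ 2 * γ (max p.1 p.2 - min p.1 p.2)) ≤
      2 * ((K:ℝ)⁻¹ * ∑ h ∈ Icc 1 K, γ h) := by
  have hKpos : (0:ℝ) < K := by exact_mod_cast hK
  rw [Finset.sum_product]
  have inner_bd : ∀ k ∈ Icc 1 K,
      ∑ l ∈ Icc 1 K, (if k = l then (0:ℝ) else ((K:ℝ)⁻¹) ^ 2 * γ (max k l - min k l)) ≤
        ((K:ℝ)⁻¹) ^ 2 * (2 * ∑ h ∈ Icc 1 K, γ h) := by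
    intro k hk
    rw [Finset.mem_Icc] at hk
    have step : ∀ l ∈ Icc 1 K, (if k = l then (0:ℝ) else ((K:ℝ)⁻¹) ^ 2 * γ (max k l - min k l)) ≤
        ((K:ℝ)⁻¹) ^ 2 * ((if l < k then γ (k - l) else 0) + (if k < l then γ (l - k) else 0)) := by
      intro l hl
      rcases lt_trichotomy k l with h | h | h
      · rw [if_neg h.ne, if_neg (by omega), if_pos h, max_eq_right h.le, min_eq_left h.le]
        simp [mul_le_mul_of_nonneg_left, le_refl]
      · subst h; simp
      · rw [if_neg (by omega), if_pos h, if_neg (by omega), max_eq_left h.le, min_eq_right h.le]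
        simp
    calc ∑ l ∈ Icc 1 K, (if k = l then (0:ℝ) else ((K:ℝ)⁻¹) ^ 2 * γ (max k l - min k l))
        ≤ ∑ l ∈ Icc 1 K, ((K:ℝ)⁻¹) ^ 2 *
            ((if l < k then γ (k - l) else 0) + (if k < l then γ (l - k) else 0)) :=
          Finset.sum_le_sum step
      _ = ((K:ℝ)⁻¹) ^ 2 * ((∑ l ∈ Icc 1 K, if l < k then γ (k - l) else 0) +
            ∑ l ∈ Icc 1 K, if k < l then γ (l - k) else 0) := by
          rw [← Finset.mul_sum, Finset.sum_add_distrib]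
      _ ≤ ((K:ℝ)⁻¹) ^ 2 * (2 * ∑ h ∈ Icc 1 K, γ h) := by
          have h1 : (∑ l ∈ Icc 1 K, if l < k then γ (k - l) else 0) ≤ ∑ h ∈ Icc 1 K, γ h := by
            rw [← Finset.sum_filter]
            refine vdc_filter_sum_le γ hγ K _ (fun l => k - l) ?_ ?_
            · intro a ha b hb hab
              simp only [Finset.mem_filter, Finset.mem_Icc] at ha hb
              omega
            · intro l hl
              simp only [Finset.mem_filter, Finset.mem_Icc] at hl ⊢
              omega
          have h2 : (∑ l ∈ Icc 1 K, if k < l then γ (l - k) else 0) ≤ ∑ h ∈ Icc 1 K, γ h := by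
            rw [← Finset.sum_filter]
            refine vdc_filter_sum_le γ hγ K _ (fun l => l - k) ?_ ?_
            · intro a ha b hb hab
              simp only [Finset.mem_filter, Finset.mem_Icc] at ha hb
              omega
            · intro l hl
              simp only [Finset.mem_filter, Finset.mem_Icc] at hl ⊢
              omega
          have := add_le_add h1 h2
          have hnn : (0:ℝ) ≤ ((K:ℝ)⁻¹) ^ 2 := by positivity
          nlinarith
  calc ∑ k ∈ Icc 1 K, ∑ l ∈ Icc 1 K,
        (if k = l then (0:ℝ) else ((K:ℝ)⁻¹) ^ 2 * γ (max k l - min k l))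
      ≤ ∑ k ∈ Icc 1 K, ((K:ℝ)⁻¹) ^ 2 * (2 * ∑ h ∈ Icc 1 K, γ h) :=
        Finset.sum_le_sum inner_bd
    _ = (K:ℝ) * (((K:ℝ)⁻¹) ^ 2 * (2 * ∑ h ∈ Icc 1 K, γ h)) := by
        rw [Finset.sum_const, Nat.card_Icc]
        simp [nsmul_eq_mul]
    _ = 2 * ((K:ℝ)⁻¹ * ∑ h ∈ Icc 1 K, γ h) := by
        field_simp

set_option linter.unusedSectionVars false

noncomputable def vdcT {E : Type*} [NormedAddCommGroup E] [InnerProductSpace ℂ E]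
    (u : ℕ → E) (h m : ℕ) : ℂ :=
  ∑ n ∈ Icc 1 m, (inner ℂ (u n) (u (n + h)) : ℂ)

noncomputable def vdcC {E : Type*} [NormedAddCommGroup E] [InnerProductSpace ℂ E]
    (u : ℕ → E) (h N : ℕ) : ℝ :=
  ‖(N : ℂ)⁻¹ * vdcT u h N‖

section basic
variable {E : Type*} [NormedAddCommGroup E] [InnerProductSpace ℂ E]
variable {u : ℕ → E} {M : ℝ} (hM : ∀ n, ‖u n‖ ≤ M)

include hM

lemma vdc_inner_le (a b : ℕ) : ‖(inner ℂ (u a) (u b) : ℂ)‖ ≤ M ^ 2 := by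
  have h0 : 0 ≤ M := (norm_nonneg (u 0)).trans (hM 0)
  have := norm_inner_le_norm (𝕜 := ℂ) (u a) (u b)
  calc ‖(inner ℂ (u a) (u b) : ℂ)‖ ≤ ‖u a‖ * ‖u b‖ := this
    _ ≤ M * M := mul_le_mul (hM a) (hM b) (norm_nonneg _) h0
    _ = M ^ 2 := (sq M).symm

lemma vdc_T_le (h m : ℕ) : ‖vdcT u h m‖ ≤ m * M ^ 2 := by
  calc ‖vdcT u h m‖ ≤ ∑ n ∈ Icc 1 m, ‖(inner ℂ (u n) (u (n + h)) : ℂ)‖ := by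
        exact norm_sum_le _ _
    _ ≤ ∑ n ∈ Icc 1 m, M ^ 2 := Finset.sum_le_sum fun n _ => vdc_inner_le hM n (n + h)
    _ = m * M ^ 2 := by rw [Finset.sum_const, Nat.card_Icc]; simp [nsmul_eq_mul]

lemma vdc_C_eq (h N : ℕ) : (N : ℝ) * vdcC u h N = ‖vdcT u h N‖ := by
  rcases Nat.eq_zero_or_pos N with rfl | hN
  · simp [vdcC, vdcT]
  · rw [vdcC, norm_mul, norm_inv, Complex.norm_natCast]
    have : (N : ℝ) ≠ 0 := by positivity
    field_simp

lemma vdc_C_le (h N : ℕ) : vdcC u h N ≤ M ^ 2 := by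
  have h0 : 0 ≤ M := (norm_nonneg (u 0)).trans (hM 0)
  rcases Nat.eq_zero_or_pos N with rfl | hN
  · simp [vdcC]; positivity
  · have hNpos : (0:ℝ) < N := by exact_mod_cast hN
    have h1 := vdc_T_le hM h N
    rw [← vdc_C_eq hM h N] at h1
    have := (mul_le_mul_iff_right₀ hNpos).1 h1
    exact this

lemma vdc_C_nonneg (h N : ℕ) : 0 ≤ vdcC u h N := norm_nonneg _

lemma vdc_norm_sum_le (s : Finset ℕ) : ‖∑ m ∈ s, u m‖ ≤ s.card * M := by
  calc ‖∑ m ∈ s, u m‖ ≤ ∑ m ∈ s, ‖u m‖ := norm_sum_le _ _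
    _ ≤ ∑ m ∈ s, M := Finset.sum_le_sum fun m _ => hM m
    _ = s.card * M := by rw [Finset.sum_const, nsmul_eq_mul]

end basic



section dpart
variable {E : Type*} [NormedAddCommGroup E] [InnerProductSpace ℂ E]
variable {u : ℕ → E} {M : ℝ} (hM : ∀ n, ‖u n‖ ≤ M)

include hM

lemma vdc_D_diag (k N : ℕ) :
    (N : ℝ)⁻¹ * ∑ n ∈ range N, (inner ℂ (u (n + k)) (u (n + k)) : ℂ).re ≤ M ^ 2 := by
  have h0 : 0 ≤ M := (norm_nonneg (u 0)).trans (hM 0)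
  rcases Nat.eq_zero_or_pos N with rfl | hN
  · simp; positivity
  · have hNpos : (0:ℝ) < N := by exact_mod_cast hN
    have hsum : ∑ n ∈ range N, (inner ℂ (u (n + k)) (u (n + k)) : ℂ).re ≤ N * M ^ 2 := by
      calc ∑ n ∈ range N, (inner ℂ (u (n + k)) (u (n + k)) : ℂ).re
          ≤ ∑ n ∈ range N, M ^ 2 := by
            refine Finset.sum_le_sum fun n _ => ?_
            have h1 : ‖u (n + k)‖ ^ 2 = RCLike.re (inner ℂ (u (n+k)) (u (n+k)) : ℂ) :=
              norm_sq_eq_re_inner (𝕜 := ℂ) (u (n + k))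
            rw [RCLike.re_to_complex] at h1
            rw [← h1]
            have := hM (n + k)
            nlinarith [norm_nonneg (u (n + k))]
        _ = N * M ^ 2 := by rw [Finset.sum_const, Finset.card_range, nsmul_eq_mul]
    calc (N : ℝ)⁻¹ * ∑ n ∈ range N, (inner ℂ (u (n + k)) (u (n + k)) : ℂ).re
        ≤ (N : ℝ)⁻¹ * (N * M ^ 2) := by
          apply mul_le_mul_of_nonneg_left hsum (by positivity)
      _ = M ^ 2 := by field_simp

lemma vdc_D_lt (K N k l : ℕ) (hk : 1 ≤ k) (hkl : k < l) (hlK : l ≤ K) (hN : 1 ≤ N) :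
    (N : ℝ)⁻¹ * ∑ n ∈ range N, (inner ℂ (u (n + k)) (u (n + l)) : ℂ).re ≤
      vdcC u (l - k) (N + k - 1) + 2 * K * M ^ 2 / N := by
  have h0 : 0 ≤ M := (norm_nonneg (u 0)).trans (hM 0)
  have hNpos : (0:ℝ) < N := by exact_mod_cast hN
  set h := l - k with hh
  have e2 : ∑ n ∈ range N, (inner ℂ (u (n + k)) (u (n + l)) : ℂ) =
      vdcT u h (N + k - 1) - vdcT u h (k - 1) := by
    calc ∑ n ∈ range N, (inner ℂ (u (n + k)) (u (n + l)) : ℂ)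
        = ∑ n ∈ range N, (fun m => (inner ℂ (u m) (u (m + h)) : ℂ)) (n + k) := by
          refine Finset.sum_congr rfl fun n _ => ?_
          dsimp only
          rw [show n + k + h = n + l by omega]
      _ = _ := vdc_shift_sum (fun m => (inner ℂ (u m) (u (m + h)) : ℂ)) k N hk
  have e3 : ∑ n ∈ range N, (inner ℂ (u (n + k)) (u (n + l)) : ℂ).re ≤
      ‖vdcT u h (N + k - 1)‖ + ‖vdcT u h (k - 1)‖ := by
    calc ∑ n ∈ range N, (inner ℂ (u (n + k)) (u (n + l)) : ℂ).re
        = (∑ n ∈ range N, (inner ℂ (u (n + k)) (u (n + l)) : ℂ)).re := by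
          rw [Complex.re_sum]
      _ ≤ ‖∑ n ∈ range N, (inner ℂ (u (n + k)) (u (n + l)) : ℂ)‖ :=
          Complex.re_le_norm _
      _ = ‖vdcT u h (N + k - 1) - vdcT u h (k - 1)‖ := by rw [e2]
      _ ≤ _ := by
          simpa [sub_eq_add_neg, norm_neg] using
            norm_add_le (vdcT u h (N + k - 1)) (-vdcT u h (k - 1))
  set c := vdcC u h (N + k - 1) with hc
  have c0 : 0 ≤ c := vdc_C_nonneg hM h (N + k - 1)
  have cM : c ≤ M ^ 2 := vdc_C_le hM h (N + k - 1)
  have eq4 : ‖vdcT u h (N + k - 1)‖ = ((N + k - 1 : ℕ) : ℝ) * c :=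
    (vdc_C_eq hM h (N + k - 1)).symm
  have e5 : ‖vdcT u h (k - 1)‖ ≤ ((k - 1 : ℕ) : ℝ) * M ^ 2 := vdc_T_le hM h (k - 1)
  have hc1 : ((N + k - 1 : ℕ) : ℝ) ≤ (N : ℝ) + (K : ℝ) := by
    have h1 : (N + k - 1 : ℕ) ≤ N + K := by omega
    calc ((N + k - 1 : ℕ) : ℝ) ≤ ((N + K : ℕ) : ℝ) := by exact_mod_cast h1
      _ = (N : ℝ) + K := by push_cast; ring
  have hc2 : ((k - 1 : ℕ) : ℝ) ≤ (K : ℝ) := by exact_mod_cast (by omega : k - 1 ≤ K)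
  have hK0 : (0:ℝ) ≤ K := by positivity
  have sumle : ∑ n ∈ range N, (inner ℂ (u (n + k)) (u (n + l)) : ℂ).re ≤
      (N : ℝ) * c + 2 * K * M ^ 2 := by
    have habs1 : ‖vdcT u h (N + k - 1)‖ ≤ (N : ℝ) * c + (K : ℝ) * M ^ 2 := by
      rw [eq4]
      nlinarith
    have habs2 : ‖vdcT u h (k - 1)‖ ≤ (K : ℝ) * M ^ 2 := by nlinarith
    nlinarith
  calc (N : ℝ)⁻¹ * ∑ n ∈ range N, (inner ℂ (u (n + k)) (u (n + l)) : ℂ).re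
      ≤ (N : ℝ)⁻¹ * ((N : ℝ) * c + 2 * K * M ^ 2) := by
        apply mul_le_mul_of_nonneg_left sumle (by positivity)
    _ = c + 2 * K * M ^ 2 / N := by field_simp

end dpart

set_option maxHeartbeats 1000000


lemma vdc_key_pointwise {E : Type*} [NormedAddCommGroup E] [InnerProductSpace ℂ E]
    (u : ℕ → E) (M : ℝ) (hM : ∀ n, ‖u n‖ ≤ M) (K N : ℕ) (hK : 1 ≤ K) (hN : 1 ≤ N) :
    ‖(N : ℝ)⁻¹ • ∑ n ∈ Icc 1 N, u n‖ ^ 2 ≤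
      (M ^ 2 / K + 14 * K ^ 2 * M ^ 2 / N) +
      ∑ p ∈ Icc 1 K ×ˢ Icc 1 K,
        (if p.1 = p.2 then (0:ℝ)
          else ((K:ℝ)⁻¹) ^ 2 * vdcC u (max p.1 p.2 - min p.1 p.2) (N + min p.1 p.2 - 1)) := by
  have h0 : 0 ≤ M := (norm_nonneg (u 0)).trans (hM 0)
  have hNpos : (0:ℝ) < N := by exact_mod_cast hN
  have hKpos : (0:ℝ) < K := by exact_mod_cast hK
  have hK1 : (1:ℝ) ≤ K := by exact_mod_cast hK
  have hN1 : (1:ℝ) ≤ N := by exact_mod_cast hN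
  set ε : ℝ := (N:ℝ)⁻¹ with hε
  have hε0 : 0 ≤ ε := by positivity
  have hεN : ε * N = 1 := by rw [hε]; exact inv_mul_cancel₀ hNpos.ne'
  have hε1 : ε ≤ 1 := by rw [hε]; exact inv_le_one_of_one_le₀ hN1
  set S : E := ∑ n ∈ Icc 1 N, u n with hS
  set w : ℕ → E := fun n => ∑ k ∈ Icc 1 K, u (n + k) with hw
  set x : E := (N:ℝ)⁻¹ • S with hx
  set y : E := (ε * (K:ℝ)⁻¹) • ∑ n ∈ range N, w n with hy
  -- Step A : ‖x - y‖ ≤ 2*K*M*ε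
  have hstepA : ‖x - y‖ ≤ 2 * K * M * ε := by
    have hdiff : (K:ℝ) • S - ∑ n ∈ range N, w n =
        ∑ k ∈ Icc 1 K, (S - ((∑ m ∈ Icc 1 (N + k - 1), u m) - ∑ m ∈ Icc 1 (k - 1), u m)) := by
      have h1 : ∑ n ∈ range N, w n =
          ∑ k ∈ Icc 1 K, ((∑ m ∈ Icc 1 (N + k - 1), u m) - ∑ m ∈ Icc 1 (k - 1), u m) := by
        rw [hw]
        rw [Finset.sum_comm]
        refine Finset.sum_congr rfl fun k hk => ?_
        rw [Finset.mem_Icc] at hk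
        exact vdc_shift_sum u k N hk.1
      have h2 : (K:ℝ) • S = ∑ _k ∈ Icc 1 K, S := by
        rw [Finset.sum_const, Nat.card_Icc, Nat.add_sub_cancel, ← Nat.cast_smul_eq_nsmul ℝ]
      rw [h1, h2, ← Finset.sum_sub_distrib]
    have hknorm : ∀ k ∈ Icc 1 K,
        ‖S - ((∑ m ∈ Icc 1 (N + k - 1), u m) - ∑ m ∈ Icc 1 (k - 1), u m)‖ ≤ 2 * K * M := by
      intro k hk
      rw [Finset.mem_Icc] at hk
      have hsub : Icc 1 N ⊆ Icc 1 (N + k - 1) := Finset.Icc_subset_Icc_right (by omega)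
      have h1 : (∑ m ∈ Icc 1 (N + k - 1), u m) - S =
          ∑ m ∈ Icc 1 (N + k - 1) \ Icc 1 N, u m := (Finset.sum_sdiff_eq_sub hsub).symm
      have hcard1 : ((Icc 1 (N + k - 1) \ Icc 1 N).card : ℝ) ≤ (K : ℝ) := by
        have := Finset.card_sdiff_of_subset hsub
        rw [this, Nat.card_Icc, Nat.card_Icc]
        have : N + k - 1 + 1 - 1 - (N + 1 - 1) ≤ K := by omega
        exact_mod_cast this
      have hcard2 : ((Icc 1 (k - 1)).card : ℝ) ≤ (K : ℝ) := by
        rw [Nat.card_Icc]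
        exact_mod_cast (by omega : k - 1 + 1 - 1 ≤ K)
      calc ‖S - ((∑ m ∈ Icc 1 (N + k - 1), u m) - ∑ m ∈ Icc 1 (k - 1), u m)‖
          = ‖(∑ m ∈ Icc 1 (k - 1), u m) - (∑ m ∈ Icc 1 (N + k - 1) \ Icc 1 N, u m)‖ := by
            rw [← h1]; congr 1; abel
        _ ≤ ‖∑ m ∈ Icc 1 (k - 1), u m‖ + ‖∑ m ∈ Icc 1 (N + k - 1) \ Icc 1 N, u m‖ :=
            norm_sub_le _ _
        _ ≤ (Icc 1 (k - 1)).card * M + (Icc 1 (N + k - 1) \ Icc 1 N).card * M :=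
            add_le_add (vdc_norm_sum_le hM _) (vdc_norm_sum_le hM _)
        _ ≤ K * M + K * M := by
            exact add_le_add (mul_le_mul_of_nonneg_right hcard2 h0)
              (mul_le_mul_of_nonneg_right hcard1 h0)
        _ = 2 * K * M := by ring
    have hbig : ‖(K:ℝ) • S - ∑ n ∈ range N, w n‖ ≤ K * (2 * K * M) := by
      rw [hdiff]
      calc ‖∑ k ∈ Icc 1 K, (S - ((∑ m ∈ Icc 1 (N + k - 1), u m) - ∑ m ∈ Icc 1 (k - 1), u m))‖
          ≤ ∑ k ∈ Icc 1 K, ‖S - ((∑ m ∈ Icc 1 (N + k - 1), u m) - ∑ m ∈ Icc 1 (k - 1), u m)‖ :=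
            norm_sum_le _ _
        _ ≤ ∑ _k ∈ Icc 1 K, 2 * K * M := Finset.sum_le_sum hknorm
        _ = K * (2 * K * M) := by
            rw [Finset.sum_const, Nat.card_Icc, Nat.add_sub_cancel, nsmul_eq_mul]
    have hxy : x - y = (ε * (K:ℝ)⁻¹) • ((K:ℝ) • S - ∑ n ∈ range N, w n) := by
      rw [smul_sub, hx, hy, smul_smul]
      congr 2
      rw [hε]; field_simp
    rw [hxy, norm_smul]
    have : ‖ε * (K:ℝ)⁻¹‖ = ε * (K:ℝ)⁻¹ := by
      rw [Real.norm_eq_abs, abs_of_nonneg (by positivity)]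
    rw [this]
    calc ε * (K:ℝ)⁻¹ * ‖(K:ℝ) • S - ∑ n ∈ range N, w n‖
        ≤ ε * (K:ℝ)⁻¹ * (K * (2 * K * M)) := by
          apply mul_le_mul_of_nonneg_left hbig (by positivity)
      _ = 2 * K * M * ε := by field_simp
  -- Step B
  have hvM : ∀ n, ‖(K:ℝ)⁻¹ • w n‖ ≤ M := by
    intro n
    rw [norm_smul, Real.norm_eq_abs, abs_of_nonneg (by positivity : (0:ℝ) ≤ (K:ℝ)⁻¹)]
    have h1 : ‖w n‖ ≤ K * M := by
      have := vdc_norm_sum_le hM ((Icc 1 K).image (fun k => n + k))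
      calc ‖w n‖ ≤ ∑ k ∈ Icc 1 K, ‖u (n + k)‖ := norm_sum_le _ _
        _ ≤ ∑ _k ∈ Icc 1 K, M := Finset.sum_le_sum fun k _ => hM _
        _ = K * M := by rw [Finset.sum_const, Nat.card_Icc, Nat.add_sub_cancel, nsmul_eq_mul]
    calc (K:ℝ)⁻¹ * ‖w n‖ ≤ (K:ℝ)⁻¹ * (K * M) := by
          apply mul_le_mul_of_nonneg_left h1 (by positivity)
      _ = M := by field_simp
  have hyeq : y = ε • ∑ n ∈ range N, (K:ℝ)⁻¹ • w n := by
    rw [hy, ← Finset.smul_sum, smul_smul]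
  have hyM : ‖y‖ ≤ M := by
    rw [hyeq, norm_smul, Real.norm_eq_abs, abs_of_nonneg hε0]
    calc ε * ‖∑ n ∈ range N, (K:ℝ)⁻¹ • w n‖ ≤ ε * ∑ n ∈ range N, ‖(K:ℝ)⁻¹ • w n‖ := by
          apply mul_le_mul_of_nonneg_left (norm_sum_le _ _) hε0
      _ ≤ ε * ∑ _n ∈ range N, M := by
          apply mul_le_mul_of_nonneg_left (Finset.sum_le_sum fun n _ => hvM n) hε0
      _ = ε * (N * M) := by rw [Finset.sum_const, Finset.card_range, nsmul_eq_mul]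
      _ = M := by rw [← mul_assoc, hεN, one_mul]
  have hy2 : ‖y‖ ^ 2 ≤ ε * ∑ n ∈ range N, ‖(K:ℝ)⁻¹ • w n‖ ^ 2 := by
    have h1 : ‖y‖ ≤ ε * ∑ n ∈ range N, ‖(K:ℝ)⁻¹ • w n‖ := by
      rw [hyeq, norm_smul, Real.norm_eq_abs, abs_of_nonneg hε0]
      apply mul_le_mul_of_nonneg_left (norm_sum_le _ _) hε0
    have h2 : (∑ n ∈ range N, ‖(K:ℝ)⁻¹ • w n‖) ^ 2 ≤
        (N:ℝ) * ∑ n ∈ range N, ‖(K:ℝ)⁻¹ • w n‖ ^ 2 := by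
      have := Finset.sum_mul_sq_le_sq_mul_sq (range N) (fun _ => (1:ℝ))
        (fun n => ‖(K:ℝ)⁻¹ • w n‖)
      simpa [Finset.card_range] using this
    have h3 : ‖y‖ ^ 2 ≤ (ε * ∑ n ∈ range N, ‖(K:ℝ)⁻¹ • w n‖) ^ 2 :=
      pow_le_pow_left₀ (norm_nonneg y) h1 2
    calc ‖y‖ ^ 2 ≤ (ε * ∑ n ∈ range N, ‖(K:ℝ)⁻¹ • w n‖) ^ 2 := h3
      _ = ε * ε * (∑ n ∈ range N, ‖(K:ℝ)⁻¹ • w n‖) ^ 2 := by ring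
      _ ≤ ε * ε * ((N:ℝ) * ∑ n ∈ range N, ‖(K:ℝ)⁻¹ • w n‖ ^ 2) := by
          apply mul_le_mul_of_nonneg_left h2 (by positivity)
      _ = (ε * N) * (ε * ∑ n ∈ range N, ‖(K:ℝ)⁻¹ • w n‖ ^ 2) := by ring
      _ = ε * ∑ n ∈ range N, ‖(K:ℝ)⁻¹ • w n‖ ^ 2 := by rw [hεN, one_mul]
  -- Step C : expansion of ‖(K:ℝ)⁻¹ • w n‖^2
  have hstepC : ∀ n, ‖(K:ℝ)⁻¹ • w n‖ ^ 2 =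
      ((K:ℝ)⁻¹) ^ 2 * ∑ k ∈ Icc 1 K, ∑ l ∈ Icc 1 K, (inner ℂ (u (n + k)) (u (n + l)) : ℂ).re := by
    intro n
    rw [norm_smul, Real.norm_eq_abs, abs_of_nonneg (by positivity : (0:ℝ) ≤ (K:ℝ)⁻¹), mul_pow]
    congr 1
    have h1 : ‖w n‖ ^ 2 = RCLike.re (inner ℂ (w n) (w n) : ℂ) := norm_sq_eq_re_inner (𝕜 := ℂ) (w n)
    rw [h1, RCLike.re_to_complex]
    rw [hw]
    dsimp only
    rw [sum_inner]
    rw [Complex.re_sum]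
    refine Finset.sum_congr rfl fun k _ => ?_
    rw [inner_sum, Complex.re_sum]
  -- Step D : rearrange
  have hstepD : ε * ∑ n ∈ range N, ‖(K:ℝ)⁻¹ • w n‖ ^ 2 =
      ∑ p ∈ Icc 1 K ×ˢ Icc 1 K, ((K:ℝ)⁻¹) ^ 2 *
        (ε * ∑ n ∈ range N, (inner ℂ (u (n + p.1)) (u (n + p.2)) : ℂ).re) := by
    rw [Finset.sum_product]
    calc ε * ∑ n ∈ range N, ‖(K:ℝ)⁻¹ • w n‖ ^ 2
        = ε * ∑ n ∈ range N, ((K:ℝ)⁻¹) ^ 2 *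
            ∑ k ∈ Icc 1 K, ∑ l ∈ Icc 1 K, (inner ℂ (u (n + k)) (u (n + l)) : ℂ).re := by
          rw [Finset.sum_congr rfl fun n _ => hstepC n]
      _ = ∑ n ∈ range N, ∑ k ∈ Icc 1 K, ∑ l ∈ Icc 1 K,
            ε * ((K:ℝ)⁻¹) ^ 2 * (inner ℂ (u (n + k)) (u (n + l)) : ℂ).re := by
          rw [Finset.mul_sum]
          refine Finset.sum_congr rfl fun n _ => ?_
          rw [Finset.mul_sum, Finset.mul_sum]
          refine Finset.sum_congr rfl fun k _ => ?_
          rw [Finset.mul_sum, Finset.mul_sum]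
          refine Finset.sum_congr rfl fun l _ => ?_
          ring
      _ = ∑ k ∈ Icc 1 K, ∑ n ∈ range N, ∑ l ∈ Icc 1 K,
            ε * ((K:ℝ)⁻¹) ^ 2 * (inner ℂ (u (n + k)) (u (n + l)) : ℂ).re := Finset.sum_comm
      _ = ∑ k ∈ Icc 1 K, ∑ l ∈ Icc 1 K, ∑ n ∈ range N,
            ε * ((K:ℝ)⁻¹) ^ 2 * (inner ℂ (u (n + k)) (u (n + l)) : ℂ).re := by
          exact Finset.sum_congr rfl fun k _ => Finset.sum_comm
      _ = ∑ k ∈ Icc 1 K, ∑ l ∈ Icc 1 K, ((K:ℝ)⁻¹) ^ 2 *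
            (ε * ∑ n ∈ range N, (inner ℂ (u (n + k)) (u (n + l)) : ℂ).re) := by
          refine Finset.sum_congr rfl fun k _ => Finset.sum_congr rfl fun l _ => ?_
          rw [Finset.mul_sum, Finset.mul_sum]
          refine Finset.sum_congr rfl fun n _ => ?_
          ring
  -- Step E : bound each term
  have hstepE : ∀ p ∈ Icc 1 K ×ˢ Icc 1 K,
      ((K:ℝ)⁻¹) ^ 2 * (ε * ∑ n ∈ range N, (inner ℂ (u (n + p.1)) (u (n + p.2)) : ℂ).re) ≤
        (if p.1 = p.2 then (0:ℝ)
          else ((K:ℝ)⁻¹) ^ 2 * vdcC u (max p.1 p.2 - min p.1 p.2) (N + min p.1 p.2 - 1)) +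
        (if p.1 = p.2 then ((K:ℝ)⁻¹) ^ 2 * M ^ 2 else ((K:ℝ)⁻¹) ^ 2 * (2 * K * M ^ 2 * ε)) := by
    rintro ⟨k, l⟩ hp
    dsimp only
    rw [Finset.mem_product, Finset.mem_Icc, Finset.mem_Icc] at hp
    obtain ⟨⟨hk1, hkK⟩, hl1, hlK⟩ := hp
    have hKinv2 : (0:ℝ) ≤ ((K:ℝ)⁻¹) ^ 2 := by positivity
    rcases lt_trichotomy k l with hlt | heq | hgt
    · simp only [if_neg hlt.ne]
      have hD := vdc_D_lt hM K N k l hk1 hlt hlK hN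
      rw [max_eq_right hlt.le, min_eq_left hlt.le]
      have := mul_le_mul_of_nonneg_left hD hKinv2
      rw [show (N:ℝ)⁻¹ = ε from rfl] at this
      calc ((K:ℝ)⁻¹) ^ 2 * (ε * ∑ n ∈ range N, (inner ℂ (u (n + k)) (u (n + l)) : ℂ).re)
          ≤ ((K:ℝ)⁻¹) ^ 2 * (vdcC u (l - k) (N + k - 1) + 2 * K * M ^ 2 / N) := this
        _ = ((K:ℝ)⁻¹) ^ 2 * vdcC u (l - k) (N + k - 1) +
              ((K:ℝ)⁻¹) ^ 2 * (2 * K * M ^ 2 * ε) := by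
            rw [div_eq_mul_inv, ← hε]; ring
    · subst heq
      rw [if_pos rfl, if_pos rfl]
      have hD := vdc_D_diag hM k N
      rw [show (N:ℝ)⁻¹ = ε from rfl] at hD
      have := mul_le_mul_of_nonneg_left hD hKinv2
      linarith
    · simp only [if_neg hgt.ne']
      have hsymm : ∀ n, (inner ℂ (u (n + k)) (u (n + l)) : ℂ).re =
          (inner ℂ (u (n + l)) (u (n + k)) : ℂ).re := by
        intro n
        have := inner_re_symm (𝕜 := ℂ) (u (n + k)) (u (n + l))
        rwa [RCLike.re_to_complex, RCLike.re_to_complex] at this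
      rw [Finset.sum_congr rfl fun n _ => hsymm n]
      have hD := vdc_D_lt hM K N l k hl1 hgt hkK hN
      rw [max_eq_left hgt.le, min_eq_right hgt.le]
      have := mul_le_mul_of_nonneg_left hD hKinv2
      rw [show (N:ℝ)⁻¹ = ε from rfl] at this
      calc ((K:ℝ)⁻¹) ^ 2 * (ε * ∑ n ∈ range N, (inner ℂ (u (n + l)) (u (n + k)) : ℂ).re)
          ≤ ((K:ℝ)⁻¹) ^ 2 * (vdcC u (k - l) (N + l - 1) + 2 * K * M ^ 2 / N) := this
        _ = ((K:ℝ)⁻¹) ^ 2 * vdcC u (k - l) (N + l - 1) +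
              ((K:ℝ)⁻¹) ^ 2 * (2 * K * M ^ 2 * ε) := by
            rw [div_eq_mul_inv, ← hε]; ring
  -- second sum computation
  have hsecond : ∑ p ∈ Icc 1 K ×ˢ Icc 1 K,
      (if p.1 = p.2 then ((K:ℝ)⁻¹) ^ 2 * M ^ 2 else ((K:ℝ)⁻¹) ^ 2 * (2 * K * M ^ 2 * ε)) ≤
      M ^ 2 / K + 2 * K * M ^ 2 * ε := by
    have hptwise : ∀ p ∈ Icc 1 K ×ˢ Icc 1 K,
        (if p.1 = p.2 then ((K:ℝ)⁻¹) ^ 2 * M ^ 2 else ((K:ℝ)⁻¹) ^ 2 * (2 * K * M ^ 2 * ε)) ≤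
          (if p.1 = p.2 then ((K:ℝ)⁻¹) ^ 2 * M ^ 2 else 0) + ((K:ℝ)⁻¹) ^ 2 * (2 * K * M ^ 2 * ε) := by
      rintro ⟨k, l⟩ _
      dsimp only
      by_cases h : k = l
      · rw [if_pos h, if_pos h]
        have : (0:ℝ) ≤ ((K:ℝ)⁻¹) ^ 2 * (2 * K * M ^ 2 * ε) := by positivity
        linarith
      · rw [if_neg h, if_neg h, zero_add]
    calc ∑ p ∈ Icc 1 K ×ˢ Icc 1 K,
          (if p.1 = p.2 then ((K:ℝ)⁻¹) ^ 2 * M ^ 2 else ((K:ℝ)⁻¹) ^ 2 * (2 * K * M ^ 2 * ε))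
        ≤ ∑ p ∈ Icc 1 K ×ˢ Icc 1 K,
            ((if p.1 = p.2 then ((K:ℝ)⁻¹) ^ 2 * M ^ 2 else 0) +
              ((K:ℝ)⁻¹) ^ 2 * (2 * K * M ^ 2 * ε)) := Finset.sum_le_sum hptwise
      _ = (∑ p ∈ Icc 1 K ×ˢ Icc 1 K, (if p.1 = p.2 then ((K:ℝ)⁻¹) ^ 2 * M ^ 2 else 0)) +
            ((Icc 1 K ×ˢ Icc 1 K).card : ℝ) * (((K:ℝ)⁻¹) ^ 2 * (2 * K * M ^ 2 * ε)) := by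
          rw [Finset.sum_add_distrib, Finset.sum_const, nsmul_eq_mul]
      _ ≤ M ^ 2 / K + 2 * K * M ^ 2 * ε := by
          have hcard : ((Icc 1 K ×ˢ Icc 1 K).card : ℝ) = (K:ℝ) * K := by
            rw [Finset.card_product, Nat.card_Icc, Nat.add_sub_cancel]
            push_cast; ring
          have hdiag : ∑ p ∈ Icc 1 K ×ˢ Icc 1 K,
              (if p.1 = p.2 then ((K:ℝ)⁻¹) ^ 2 * M ^ 2 else 0) = (K:ℝ) * (((K:ℝ)⁻¹) ^ 2 * M ^ 2) := by
            rw [Finset.sum_product]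
            have : ∀ k ∈ Icc 1 K, ∑ l ∈ Icc 1 K,
                (if k = l then ((K:ℝ)⁻¹) ^ 2 * M ^ 2 else 0) = ((K:ℝ)⁻¹) ^ 2 * M ^ 2 := by
              intro k hk
              rw [Finset.sum_ite_eq (Icc 1 K) k (fun _ => ((K:ℝ)⁻¹) ^ 2 * M ^ 2), if_pos hk]
            rw [Finset.sum_congr rfl this, Finset.sum_const, Nat.card_Icc, Nat.add_sub_cancel,
              nsmul_eq_mul]
          rw [hdiag, hcard]
          have e1 : (K:ℝ) * (((K:ℝ)⁻¹) ^ 2 * M ^ 2) = M ^ 2 / K := by field_simp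
          have e2 : (K:ℝ) * K * (((K:ℝ)⁻¹) ^ 2 * (2 * K * M ^ 2 * ε)) = 2 * K * M ^ 2 * ε := by
            field_simp
          rw [e1, e2]
  -- final assembly
  have hyfinal : ‖y‖ ^ 2 ≤ M ^ 2 / K + 2 * K * M ^ 2 * ε +
      ∑ p ∈ Icc 1 K ×ˢ Icc 1 K,
        (if p.1 = p.2 then (0:ℝ)
          else ((K:ℝ)⁻¹) ^ 2 * vdcC u (max p.1 p.2 - min p.1 p.2) (N + min p.1 p.2 - 1)) := by
    calc ‖y‖ ^ 2 ≤ ε * ∑ n ∈ range N, ‖(K:ℝ)⁻¹ • w n‖ ^ 2 := hy2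
      _ = ∑ p ∈ Icc 1 K ×ˢ Icc 1 K, ((K:ℝ)⁻¹) ^ 2 *
            (ε * ∑ n ∈ range N, (inner ℂ (u (n + p.1)) (u (n + p.2)) : ℂ).re) := hstepD
      _ ≤ ∑ p ∈ Icc 1 K ×ˢ Icc 1 K,
            ((if p.1 = p.2 then (0:ℝ)
              else ((K:ℝ)⁻¹) ^ 2 * vdcC u (max p.1 p.2 - min p.1 p.2) (N + min p.1 p.2 - 1)) +
            (if p.1 = p.2 then ((K:ℝ)⁻¹) ^ 2 * M ^ 2
              else ((K:ℝ)⁻¹) ^ 2 * (2 * K * M ^ 2 * ε))) := Finset.sum_le_sum hstepE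
      _ = (∑ p ∈ Icc 1 K ×ˢ Icc 1 K,
            (if p.1 = p.2 then (0:ℝ)
              else ((K:ℝ)⁻¹) ^ 2 * vdcC u (max p.1 p.2 - min p.1 p.2) (N + min p.1 p.2 - 1))) +
            ∑ p ∈ Icc 1 K ×ˢ Icc 1 K,
            (if p.1 = p.2 then ((K:ℝ)⁻¹) ^ 2 * M ^ 2
              else ((K:ℝ)⁻¹) ^ 2 * (2 * K * M ^ 2 * ε)) := Finset.sum_add_distrib
      _ ≤ _ := by
          have := hsecond
          linarith
  have hxx : ‖x‖ ≤ ‖y‖ + 2 * K * M * ε := by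
    calc ‖x‖ = ‖y + (x - y)‖ := by congr 1; abel
      _ ≤ ‖y‖ + ‖x - y‖ := norm_add_le _ _
      _ ≤ ‖y‖ + 2 * K * M * ε := by linarith
  have hx2 : ‖x‖ ^ 2 ≤ (‖y‖ + 2 * K * M * ε) ^ 2 :=
    pow_le_pow_left₀ (norm_nonneg x) hxx 2
  have hfinal2 : (‖y‖ + 2 * K * M * ε) ^ 2 ≤ ‖y‖ ^ 2 + 12 * K ^ 2 * M ^ 2 * ε := by
    have hy0 : 0 ≤ ‖y‖ := norm_nonneg y
    nlinarith [mul_le_mul_of_nonneg_left hyM (show (0:ℝ) ≤ 4 * K * M * ε by positivity),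
      mul_nonneg (mul_nonneg (sub_nonneg.2 hK1) (mul_nonneg h0 h0)) hε0,
      mul_nonneg (mul_nonneg (mul_nonneg (mul_nonneg hKpos.le hKpos.le) (mul_nonneg h0 h0)) hε0)
        (sub_nonneg.2 hε1)]
  have hconv : 14 * (K:ℝ) ^ 2 * M ^ 2 / N = 14 * K ^ 2 * M ^ 2 * ε := by
    rw [div_eq_mul_inv, ← hε]
  calc ‖x‖ ^ 2 ≤ (‖y‖ + 2 * K * M * ε) ^ 2 := hx2
    _ ≤ ‖y‖ ^ 2 + 12 * K ^ 2 * M ^ 2 * ε := hfinal2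
    _ ≤ (M ^ 2 / K + 2 * K * M ^ 2 * ε + ∑ p ∈ Icc 1 K ×ˢ Icc 1 K,
          (if p.1 = p.2 then (0:ℝ)
            else ((K:ℝ)⁻¹) ^ 2 * vdcC u (max p.1 p.2 - min p.1 p.2) (N + min p.1 p.2 - 1))) +
          12 * K ^ 2 * M ^ 2 * ε := by linarith
    _ ≤ (M ^ 2 / K + 14 * K ^ 2 * M ^ 2 / N) + ∑ p ∈ Icc 1 K ×ˢ Icc 1 K,
          (if p.1 = p.2 then (0:ℝ)
            else ((K:ℝ)⁻¹) ^ 2 * vdcC u (max p.1 p.2 - min p.1 p.2) (N + min p.1 p.2 - 1)) := by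
        rw [hconv]
        have h2K : 2 * (K:ℝ) * M ^ 2 * ε ≤ 2 * K ^ 2 * M ^ 2 * ε := by
          nlinarith [mul_nonneg (mul_nonneg (sub_nonneg.2 hK1) (mul_nonneg h0 h0)) hε0]
        linarith


lemma vdc_div_nat_le {a : ℝ} (ha : 0 ≤ a) (N : ℕ) : a / N ≤ a := by
  rcases Nat.eq_zero_or_pos N with rfl | hN
  · simp [ha]
  · exact div_le_self ha (by exact_mod_cast hN)

lemma vdc_key_K {E : Type*} [NormedAddCommGroup E] [InnerProductSpace ℂ E]
    (u : ℕ → E) (M : ℝ) (hM : ∀ n, ‖u n‖ ≤ M) (K : ℕ) (hK : 1 ≤ K) :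
    limsup (fun N : ℕ => ‖(N : ℝ)⁻¹ • ∑ n ∈ Icc 1 N, u n‖ ^ 2) atTop ≤
      M ^ 2 / K + 2 * ((K:ℝ)⁻¹ * ∑ h ∈ Icc 1 K, limsup (fun N => vdcC u h N) atTop) := by
  have h0 : 0 ≤ M := (norm_nonneg (u 0)).trans (hM 0)
  have hKpos : (0:ℝ) < K := by exact_mod_cast hK
  set γ : ℕ → ℝ := fun h => limsup (fun N => vdcC u h N) atTop with hγdef
  have hγ0 : ∀ h, 0 ≤ γ h := fun h =>
    le_limsup_of_frequently_le (Frequently.of_forall fun N => vdc_C_nonneg hM h N)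
      (vdc_bddU (vdc_C_le hM h))
  set g : ℕ × ℕ → ℕ → ℝ := fun p N =>
    if p.1 = p.2 then (0:ℝ)
      else ((K:ℝ)⁻¹) ^ 2 * vdcC u (max p.1 p.2 - min p.1 p.2) (N + min p.1 p.2 - 1) with hgdef
  have hg0 : ∀ p ∈ Icc 1 K ×ˢ Icc 1 K, ∀ N, 0 ≤ g p N := by
    intro p _ N
    rw [hgdef]
    dsimp only
    split
    · exact le_refl 0
    · exact mul_nonneg (by positivity) (vdc_C_nonneg hM _ _)
  have hgC : ∀ p ∈ Icc 1 K ×ˢ Icc 1 K, ∀ N, g p N ≤ ((K:ℝ)⁻¹) ^ 2 * M ^ 2 := by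
    intro p _ N
    rw [hgdef]
    dsimp only
    split
    · positivity
    · exact mul_le_mul_of_nonneg_left (vdc_C_le hM _ _) (by positivity)
  set f1 : ℕ → ℝ := fun N => M ^ 2 / K + 14 * K ^ 2 * M ^ 2 / N with hf1def
  have hf1low : ∀ N, M ^ 2 / K ≤ f1 N := by
    intro N
    rw [hf1def]
    dsimp only
    have : (0:ℝ) ≤ 14 * K ^ 2 * M ^ 2 / N := by positivity
    linarith
  have hf1up : ∀ N, f1 N ≤ M ^ 2 / K + 14 * K ^ 2 * M ^ 2 :=
    fun N => by
      have := vdc_div_nat_le (show (0:ℝ) ≤ 14 * K ^ 2 * M ^ 2 by positivity) N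
      rw [hf1def]; dsimp only; linarith
  have hf2low : ∀ N, (0:ℝ) ≤ ∑ p ∈ Icc 1 K ×ˢ Icc 1 K, g p N :=
    fun N => Finset.sum_nonneg fun p hp => hg0 p hp N
  have hf2up : ∀ N, ∑ p ∈ Icc 1 K ×ˢ Icc 1 K, g p N ≤
      ((Icc 1 K ×ˢ Icc 1 K).card : ℝ) * (((K:ℝ)⁻¹) ^ 2 * M ^ 2) := by
    intro N
    calc ∑ p ∈ Icc 1 K ×ˢ Icc 1 K, g p N
        ≤ ∑ _p ∈ Icc 1 K ×ˢ Icc 1 K, ((K:ℝ)⁻¹) ^ 2 * M ^ 2 :=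
          Finset.sum_le_sum fun p hp => hgC p hp N
      _ = _ := by rw [Finset.sum_const, nsmul_eq_mul]
  -- step 1
  have step1 : limsup (fun N : ℕ => ‖(N : ℝ)⁻¹ • ∑ n ∈ Icc 1 N, u n‖ ^ 2) atTop ≤
      limsup (fun N => f1 N + ∑ p ∈ Icc 1 K ×ˢ Icc 1 K, g p N) atTop := by
    refine limsup_le_limsup ?_ (vdc_cobddU fun N => by positivity)
      (vdc_bddU fun N => add_le_add (hf1up N) (hf2up N))
    filter_upwards [eventually_ge_atTop 1] with N hN
    exact vdc_key_pointwise u M hM K N hK hN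
  -- step 2
  have step2 : limsup (fun N => f1 N + ∑ p ∈ Icc 1 K ×ˢ Icc 1 K, g p N) atTop ≤
      limsup f1 atTop + limsup (fun N => ∑ p ∈ Icc 1 K ×ˢ Icc 1 K, g p N) atTop := by
    have := limsup_add_le (f := (atTop : Filter ℕ)) (u := f1)
      (v := fun N => ∑ p ∈ Icc 1 K ×ˢ Icc 1 K, g p N)
      (vdc_bddL hf1low) (vdc_bddU hf1up) (vdc_cobddU hf2low) (vdc_bddU hf2up)
    simpa [Pi.add_def] using this
  have hlimf1 : limsup f1 atTop = M ^ 2 / K := by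
    have ht : Tendsto f1 atTop (nhds (M ^ 2 / K)) := by
      have := (tendsto_const_div_atTop_nhds_zero_nat (14 * K ^ 2 * M ^ 2)).const_add (M ^ 2 / K)
      simpa [hf1def] using this
    exact ht.limsup_eq
  -- step 3
  have step3 : limsup (fun N => ∑ p ∈ Icc 1 K ×ˢ Icc 1 K, g p N) atTop ≤
      ∑ p ∈ Icc 1 K ×ˢ Icc 1 K, limsup (fun N => g p N) atTop :=
    vdc_limsup_sum_le _ g (fun _ => ((K:ℝ)⁻¹) ^ 2 * M ^ 2) hg0 hgC
  have heval : ∀ p ∈ Icc 1 K ×ˢ Icc 1 K, limsup (fun N => g p N) atTop =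
      (if p.1 = p.2 then (0:ℝ) else ((K:ℝ)⁻¹) ^ 2 * γ (max p.1 p.2 - min p.1 p.2)) := by
    rintro ⟨k, l⟩ hp
    rw [Finset.mem_product, Finset.mem_Icc, Finset.mem_Icc] at hp
    obtain ⟨⟨hk1, hkK⟩, hl1, hlK⟩ := hp
    by_cases h : k = l
    · rw [if_pos h]
      have : (fun N => g (k, l) N) = fun _ => (0:ℝ) := by
        funext N; rw [hgdef]; dsimp only; rw [if_pos h]
      rw [this]
      exact limsup_const 0
    · rw [if_neg h]
      have he : (fun N => g (k, l) N) =
          fun N => ((K:ℝ)⁻¹) ^ 2 * vdcC u (max k l - min k l) (N + (min k l - 1)) := by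
        funext N; rw [hgdef]; dsimp only; rw [if_neg h]
        congr 2
        omega
      rw [he, vdc_limsup_cmul (by positivity)
        (fun N => vdc_C_nonneg hM (max k l - min k l) (N + (min k l - 1)))
        (fun N => vdc_C_le hM (max k l - min k l) (N + (min k l - 1)))]
      congr 1
      exact limsup_nat_add (fun N => vdcC u (max k l - min k l) N) (min k l - 1)
  have step4 : ∑ p ∈ Icc 1 K ×ˢ Icc 1 K, limsup (fun N => g p N) atTop ≤
      2 * ((K:ℝ)⁻¹ * ∑ h ∈ Icc 1 K, γ h) := by
    rw [Finset.sum_congr rfl heval]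
    exact vdc_counting γ hγ0 K hK
  calc limsup (fun N : ℕ => ‖(N : ℝ)⁻¹ • ∑ n ∈ Icc 1 N, u n‖ ^ 2) atTop
      ≤ limsup f1 atTop + limsup (fun N => ∑ p ∈ Icc 1 K ×ˢ Icc 1 K, g p N) atTop :=
        step1.trans step2
    _ ≤ M ^ 2 / K + 2 * ((K:ℝ)⁻¹ * ∑ h ∈ Icc 1 K, γ h) := by
        rw [hlimf1]
        have := step3.trans step4
        linarith

/-- (van der Corput inequality in Hilbert space) For a bounded sequence `(uₙ)` in a
Hilbert space,
`limsup_N ‖(1/N)∑_{n=1}^N uₙ‖² ≤ 4 limsup_H (1/H)∑_{h=1}^H limsup_N |(1/N)∑_{n=1}^N ⟨uₙ,u_{n+h}⟩|`. -/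
theorem stmt6 {H : Type*} [NormedAddCommGroup H] [InnerProductSpace ℂ H]
    (u : ℕ → H) (hb : ∃ M : ℝ, ∀ n, ‖u n‖ ≤ M) :
    Filter.limsup (fun N : ℕ => ‖(N : ℝ)⁻¹ • ∑ n ∈ Finset.Icc 1 N, u n‖ ^ 2) atTop ≤
      4 * Filter.limsup (fun K : ℕ => (K : ℝ)⁻¹ * ∑ h ∈ Finset.Icc 1 K,
        Filter.limsup (fun N : ℕ => ‖(N : ℂ)⁻¹ *
          ∑ n ∈ Finset.Icc 1 N, (inner ℂ (u n) (u (n + h)) : ℂ)‖) atTop) atTop := by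
  obtain ⟨M₀, hM₀⟩ := hb
  set M : ℝ := max M₀ 0 with hMdef
  have hM : ∀ n, ‖u n‖ ≤ M := fun n => (hM₀ n).trans (le_max_left _ _)
  have h0 : 0 ≤ M := le_max_right _ _
  show limsup (fun N : ℕ => ‖(N : ℝ)⁻¹ • ∑ n ∈ Icc 1 N, u n‖ ^ 2) atTop ≤
      4 * limsup (fun K : ℕ => (K : ℝ)⁻¹ * ∑ h ∈ Icc 1 K,
        limsup (fun N => vdcC u h N) atTop) atTop
  set γ : ℕ → ℝ := fun h => limsup (fun N => vdcC u h N) atTop with hγdef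
  have hγ0 : ∀ h, 0 ≤ γ h := fun h =>
    le_limsup_of_frequently_le (Frequently.of_forall fun N => vdc_C_nonneg hM h N)
      (vdc_bddU (vdc_C_le hM h))
  have hγM : ∀ h, γ h ≤ M ^ 2 := fun h =>
    limsup_le_of_le (vdc_cobddU fun N => vdc_C_nonneg hM h N)
      (Eventually.of_forall fun N => vdc_C_le hM h N)
  set RK : ℕ → ℝ := fun K => (K : ℝ)⁻¹ * ∑ h ∈ Icc 1 K, γ h with hRKdef
  have hRK0 : ∀ K, 0 ≤ RK K := fun K =>
    mul_nonneg (by positivity) (Finset.sum_nonneg fun h _ => hγ0 h)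
  have hRKM : ∀ K, RK K ≤ M ^ 2 := by
    intro K
    rcases Nat.eq_zero_or_pos K with rfl | hK
    · simp [hRKdef]
      positivity
    · have hKpos : (0 : ℝ) < K := by exact_mod_cast hK
      have h1 : ∑ h ∈ Icc 1 K, γ h ≤ (K : ℝ) * M ^ 2 := by
        calc ∑ h ∈ Icc 1 K, γ h ≤ ∑ _h ∈ Icc 1 K, M ^ 2 := Finset.sum_le_sum fun h _ => hγM h
          _ = (K : ℝ) * M ^ 2 := by
            rw [Finset.sum_const, Nat.card_Icc, Nat.add_sub_cancel, nsmul_eq_mul]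
      calc RK K ≤ (K : ℝ)⁻¹ * ((K : ℝ) * M ^ 2) := by
            exact mul_le_mul_of_nonneg_left h1 (by positivity)
        _ = M ^ 2 := by field_simp
  have hmain : ∀ K : ℕ, 1 ≤ K →
      limsup (fun N : ℕ => ‖(N : ℝ)⁻¹ • ∑ n ∈ Icc 1 N, u n‖ ^ 2) atTop ≤
        M ^ 2 / K + 2 * RK K := fun K hK => vdc_key_K u M hM K hK
  have hL_le : limsup (fun N : ℕ => ‖(N : ℝ)⁻¹ • ∑ n ∈ Icc 1 N, u n‖ ^ 2) atTop ≤
      limsup (fun K : ℕ => M ^ 2 / K + 2 * RK K) atTop := by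
    refine le_limsup_of_frequently_le
      (((eventually_ge_atTop 1).mono fun K hK => hmain K hK).frequently)
      (vdc_bddU (C := M ^ 2 + 2 * M ^ 2) fun K => ?_)
    have h1 := vdc_div_nat_le (show (0:ℝ) ≤ M ^ 2 by positivity) K
    have h2 := hRKM K
    linarith
  have hsplit : limsup (fun K : ℕ => M ^ 2 / K + 2 * RK K) atTop ≤
      limsup (fun K : ℕ => M ^ 2 / (K : ℝ)) atTop + limsup (fun K => 2 * RK K) atTop := by
    have := limsup_add_le (f := (atTop : Filter ℕ)) (u := fun K : ℕ => M ^ 2 / (K : ℝ))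
      (v := fun K => 2 * RK K)
      (vdc_bddL fun K => by positivity)
      (vdc_bddU fun K => vdc_div_nat_le (by positivity) K)
      (vdc_cobddU (C := 0) fun K => by linarith [hRK0 K])
      (vdc_bddU (C := 2 * M ^ 2) fun K => by linarith [hRKM K])
    simpa [Pi.add_def] using this
  have hdiv0 : limsup (fun K : ℕ => M ^ 2 / (K : ℝ)) atTop = 0 :=
    (tendsto_const_div_atTop_nhds_zero_nat (M ^ 2)).limsup_eq
  have hcm : limsup (fun K => 2 * RK K) atTop = 2 * limsup RK atTop :=
    vdc_limsup_cmul (by norm_num) hRK0 hRKM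
  have hR0 : 0 ≤ limsup RK atTop :=
    le_limsup_of_frequently_le (Frequently.of_forall hRK0) (vdc_bddU hRKM)
  have : limsup (fun N : ℕ => ‖(N : ℝ)⁻¹ • ∑ n ∈ Icc 1 N, u n‖ ^ 2) atTop ≤
      2 * limsup RK atTop := by
    rw [hdiv0, hcm] at hsplit
    linarith
  have hfin : limsup RK atTop =
      limsup (fun K : ℕ => (K : ℝ)⁻¹ * ∑ h ∈ Icc 1 K, γ h) atTop := rfl
  linarith
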